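/- Let G be a stepwise irregular graph with at least two edges. Then for every edge e of G, the graph G − e obtained by deleting e is not stepwise irregular. -/

import Mathlib

open SimpleGraph

noncomputable def deg {V : Type*} (G : SimpleGraph V) (v : V) : ℕ := (G.neighborSet v).ncard

/-- A graph is stepwise irregular if for every edge the endpoint degrees differ by exactly 1. -/
def SI {V : Type*} (G : SimpleGraph V) : Prop :=
  ∀ u v, G.Adj u v → |(deg G u : ℤ) - (deg G v : ℤ)| = 1

lemma deg_del_other {V : Type*} [Fintype V] (G : SimpleGraph V) (u v x : V)
    (hx : x ≠ u) (hx' : x ≠ v) : deg (G.deleteEdges {s(u,v)}) x = deg G x := by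
  unfold deg
  congr 1
  ext y
  simp only [mem_neighborSet, deleteEdges_adj, Set.mem_singleton_iff]
  constructor
  · rintro ⟨h, _⟩; exact h
  · intro h
    refine ⟨h, ?_⟩
    intro hxy
    rw [Sym2.eq_iff] at hxy
    rcases hxy with ⟨h1, _⟩ | ⟨h2, _⟩
    · exact hx h1
    · exact hx' h2

lemma deg_del_left {V : Type*} [Fintype V] (G : SimpleGraph V) (u v : V)
    (h : G.Adj u v) : deg (G.deleteEdges {s(u,v)}) u = deg G u - 1 := by
  unfold deg
  have hset : (G.deleteEdges {s(u,v)}).neighborSet u = G.neighborSet u \ {v} := by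
    ext y
    simp only [mem_neighborSet, deleteEdges_adj, Set.mem_singleton_iff, Set.mem_diff]
    constructor
    · rintro ⟨ha, hne⟩
      refine ⟨ha, ?_⟩
      intro hy; apply hne; rw [hy]
    · rintro ⟨ha, hne⟩
      refine ⟨ha, ?_⟩
      intro heq
      rw [Sym2.eq_iff] at heq
      rcases heq with ⟨_, h2⟩ | ⟨h1, _⟩
      · exact hne h2
      · exact G.irrefl (h1 ▸ h)
  have hv : v ∈ G.neighborSet u := h
  rw [hset, Set.ncard_diff_singleton_of_mem hv]

lemma key {V : Type*} [Fintype V] (G : SimpleGraph V) (hSI : SI G) (u v : V)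
    (h : G.Adj u v) (hd : deg G u = deg G v + 1) :
    ¬ SI (G.deleteEdges {s(u,v)}) := by
  intro hSI'
  have hv1 : 1 ≤ deg G v := by
    have : u ∈ G.neighborSet v := h.symm
    have := Set.ncard_pos (Set.toFinite _) |>.mpr ⟨u, this⟩
    exact this
  have hu2 : 2 ≤ deg G u := by omega
  have hdu : deg (G.deleteEdges {s(u,v)}) u = deg G u - 1 := deg_del_left G u v h
  have hne : ((G.deleteEdges {s(u,v)}).neighborSet u).Nonempty := by
    rw [← Set.ncard_pos (Set.toFinite _)]
    show 0 < deg _ u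
    omega
  obtain ⟨w, hw⟩ := hne
  have hadj : (G.deleteEdges {s(u,v)}).Adj u w := hw
  have hGadj : G.Adj u w := (deleteEdges_adj.mp hadj).1
  have hwv : w ≠ v := by
    intro hwv
    exact (deleteEdges_adj.mp hadj).2 (by rw [hwv]; exact Set.mem_singleton _)
  have hwu : w ≠ u := fun hwu => G.irrefl (hwu ▸ hGadj)
  have hdw : deg (G.deleteEdges {s(u,v)}) w = deg G w := deg_del_other G u v w hwu hwv
  have h1 := hSI u w hGadj
  have h2 := hSI' u w hadj
  rw [hdu, hdw] at h2
  rw [Nat.cast_sub (by omega)] at h2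
  rcases (abs_eq (by norm_num : (0:ℤ) ≤ 1)).mp h1 with h1' | h1' <;>
  rcases (abs_eq (by norm_num : (0:ℤ) ≤ 1)).mp h2 with h2' | h2' <;> omega

theorem stmt_6 {V : Type*} [Fintype V] (G : SimpleGraph V) (hSI : SI G)
    (hm : 2 ≤ G.edgeSet.ncard) (e : Sym2 V) (he : e ∈ G.edgeSet) :
    ¬ SI (G.deleteEdges {e}) := by
  induction e using Sym2.ind with
  | _ u v =>
    rw [mem_edgeSet] at he
    have h1 := hSI u v he
    rcases (abs_eq (by norm_num : (0:ℤ) ≤ 1)).mp h1 with h' | h'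
    · exact key G hSI u v he (by omega)
    · have := key G hSI v u he.symm (by omega)
      rw [Sym2.eq_swap] at this
      exact this
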